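/- Let β = (1 + √13)/2 and I = [−β, β] ⊂ ℝ; the maps g_1(x) = √(x + 3) and g_2(x) = −√(x + 3) are contractions mapping I into I. Every continuous map π : {1,2}^ℕ → I satisfying π(1ω) = √(π(ω) + 3) and π(2ω) = −√(π(ω) + 3) for all ω ∈ {1,2}^ℕ is injective, hence a homeomorphism of {1,2}^ℕ onto its image. -/

import Mathlib

/-- Prepending a symbol to a sequence in `{1,2}^ℕ`. -/
def prepend (i : Fin 2) (ω : ℕ → Fin 2) : ℕ → Fin 2 :=
  fun k => if k = 0 then i else ω (k - 1)

lemma sqrt13_bounds : (3 : ℝ) ≤ Real.sqrt 13 ∧ Real.sqrt 13 ≤ 195 / 49 := by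
  constructor
  · rw [show (3:ℝ) = Real.sqrt 9 by rw [show (9:ℝ) = 3^2 by norm_num, Real.sqrt_sq]; norm_num]
    exact Real.sqrt_le_sqrt (by norm_num)
  · rw [show (195:ℝ)/49 = Real.sqrt ((195/49)^2) by rw [Real.sqrt_sq]; norm_num]
    exact Real.sqrt_le_sqrt (by norm_num)

lemma beta_sq : ((1 + Real.sqrt 13) / 2) ^ 2 = (1 + Real.sqrt 13) / 2 + 3 := by
  have h : Real.sqrt 13 ^ 2 = 13 := Real.sq_sqrt (by norm_num)
  nlinarith [h]

/-- For `f(z) = z² - 3`: with `β = (1 + √13)/2` and `I = [-β, β]`, the two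
inverse branches `g₁(x) = √(x+3)`, `g₂(x) = -√(x+3)` are contractions mapping
`I` into `I`, and every continuous coding map `π : {1,2}^ℕ → I` with
`π(1ω) = √(π(ω)+3)`, `π(2ω) = -√(π(ω)+3)` is injective, hence a homeomorphism
onto its image. -/
theorem canonical_coding_z_sq_sub_three_injective :
    (∀ x ∈ Set.Icc (-((1 + Real.sqrt 13) / 2)) ((1 + Real.sqrt 13) / 2),
      Real.sqrt (x + 3) ∈
        Set.Icc (-((1 + Real.sqrt 13) / 2)) ((1 + Real.sqrt 13) / 2) ∧
      -Real.sqrt (x + 3) ∈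
        Set.Icc (-((1 + Real.sqrt 13) / 2)) ((1 + Real.sqrt 13) / 2)) ∧
    (∃ c : NNReal, c < 1 ∧
      LipschitzOnWith c (fun x : ℝ => Real.sqrt (x + 3))
        (Set.Icc (-((1 + Real.sqrt 13) / 2)) ((1 + Real.sqrt 13) / 2)) ∧
      LipschitzOnWith c (fun x : ℝ => -Real.sqrt (x + 3))
        (Set.Icc (-((1 + Real.sqrt 13) / 2)) ((1 + Real.sqrt 13) / 2))) ∧
    (∀ π : (ℕ → Fin 2) → ℝ, Continuous π →
      (∀ ω, π ω ∈ Set.Icc (-((1 + Real.sqrt 13) / 2)) ((1 + Real.sqrt 13) / 2)) →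
      (∀ ω, π (prepend 0 ω) = Real.sqrt (π ω + 3)) →
      (∀ ω, π (prepend 1 ω) = -Real.sqrt (π ω + 3)) →
      Function.Injective π ∧
        ∃ e : (ℕ → Fin 2) ≃ₜ Set.range π, ∀ ω, (e ω : ℝ) = π ω) := by
  set β : ℝ := (1 + Real.sqrt 13) / 2 with hβdef
  obtain ⟨hs3, hs4⟩ := sqrt13_bounds
  have hβ2 : β ^ 2 = β + 3 := beta_sq
  have hβge : (2 : ℝ) ≤ β := by rw [hβdef]; linarith
  have hβle : β ≤ 122 / 49 := by rw [hβdef]; linarith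
  -- lower bound for sqrt on the interval
  have hsqrt_lb : ∀ x ∈ Set.Icc (-β) β, (5 : ℝ) / 7 ≤ Real.sqrt (x + 3) := by
    intro x hx
    have h1 : (25 : ℝ) / 49 ≤ x + 3 := by
      have := hx.1; linarith
    calc (5:ℝ)/7 = Real.sqrt ((5/7)^2) := by
            rw [Real.sqrt_sq]; norm_num
      _ ≤ Real.sqrt (x + 3) := Real.sqrt_le_sqrt (by nlinarith)
  have hsqrt_ub : ∀ x ∈ Set.Icc (-β) β, Real.sqrt (x + 3) ≤ β := by
    intro x hx
    calc Real.sqrt (x + 3) ≤ Real.sqrt (β + 3) := Real.sqrt_le_sqrt (by linarith [hx.2])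
      _ = Real.sqrt (β ^ 2) := by rw [hβ2]
      _ = β := Real.sqrt_sq (by linarith)
  have hmem : ∀ x ∈ Set.Icc (-β) β,
      Real.sqrt (x + 3) ∈ Set.Icc (-β) β ∧ -Real.sqrt (x + 3) ∈ Set.Icc (-β) β := by
    intro x hx
    have h1 := hsqrt_lb x hx
    have h2 := hsqrt_ub x hx
    exact ⟨⟨by linarith, h2⟩, ⟨by linarith, by linarith⟩⟩
  refine ⟨hmem, ?_, ?_⟩
  · -- Lipschitz part
    have key : ∀ x ∈ Set.Icc (-β) β, ∀ y ∈ Set.Icc (-β) β,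
        |Real.sqrt (x + 3) - Real.sqrt (y + 3)| ≤ (7/10) * |x - y| := by
      intro x hx y hy
      set a := Real.sqrt (x + 3)
      set b := Real.sqrt (y + 3)
      have ha : (5:ℝ)/7 ≤ a := hsqrt_lb x hx
      have hb : (5:ℝ)/7 ≤ b := hsqrt_lb y hy
      have ha2 : a ^ 2 = x + 3 := Real.sq_sqrt (by linarith [hx.1])
      have hb2 : b ^ 2 = y + 3 := Real.sq_sqrt (by linarith [hy.1])
      have hd : (a - b) * (a + b) = x - y := by nlinarith
      have habs : |a - b| * (a + b) = |x - y| := by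
        rw [← hd, abs_mul, abs_of_nonneg (by linarith : (0:ℝ) ≤ a + b)]
      nlinarith [abs_nonneg (a - b), abs_nonneg (x - y)]
    refine ⟨⟨7/10, by norm_num⟩, ?_, ?_, ?_⟩
    · exact show (⟨7/10, by norm_num⟩ : NNReal) < 1 by
        exact NNReal.coe_lt_coe.mp (by show (7/10:ℝ) < 1; norm_num)
    · apply lipschitzOnWith_iff_dist_le_mul.mpr
      intro x hx y hy
      simp only [Real.dist_eq, NNReal.coe_mk]
      exact key x hx y hy
    · apply lipschitzOnWith_iff_dist_le_mul.mpr
      intro x hx y hy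
      simp only [Real.dist_eq, NNReal.coe_mk, neg_sub_neg]
      rw [abs_sub_comm]
      exact key x hx y hy
  · -- coding map part
    intro π hcont hπmem h1 h2
    have h2cases : ∀ i : Fin 2, i = 0 ∨ i = 1 := by decide
    have hdecomp : ∀ ω : ℕ → Fin 2, prepend (ω 0) (fun n => ω (n + 1)) = ω := by
      intro ω; funext k
      cases k with
      | zero => rfl
      | succ n => simp [prepend]
    have hpos : ∀ ω, 0 < Real.sqrt (π ω + 3) := by
      intro ω
      have := hsqrt_lb (π ω) (hπmem ω)
      linarith
    have hsign0 : ∀ ω : ℕ → Fin 2, ω 0 = 0 → 0 < π ω := by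
      intro ω h
      have hd := hdecomp ω
      rw [h] at hd
      conv_rhs => rw [← hd]
      rw [h1]
      exact hpos _
    have hsign1 : ∀ ω : ℕ → Fin 2, ω 0 = 1 → π ω < 0 := by
      intro ω h
      have hd := hdecomp ω
      rw [h] at hd
      conv_lhs => rw [← hd]
      rw [h2]
      simpa using hpos (fun n => ω (n + 1))
    have hsq : ∀ ω : ℕ → Fin 2, (π ω) ^ 2 = π (fun n => ω (n + 1)) + 3 := by
      intro ω
      have hnn : 0 ≤ π (fun n => ω (n + 1)) + 3 := by
        have := hsqrt_lb _ (hπmem (fun n => ω (n + 1)))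
        nlinarith [Real.sqrt_nonneg (π (fun n => ω (n+1)) + 3),
          Real.sq_sqrt (show (0:ℝ) ≤ π (fun n => ω (n+1)) + 3 from by
            have := (hπmem (fun n => ω (n+1))).1; linarith)]
      have hd := hdecomp ω
      rcases h2cases (ω 0) with h | h
      · rw [h] at hd
        conv_lhs => rw [← hd]
        rw [h1, Real.sq_sqrt hnn]
      · rw [h] at hd
        conv_lhs => rw [← hd]
        rw [h2, neg_sq, Real.sq_sqrt hnn]
    have hinj : Function.Injective π := by
      have main : ∀ n : ℕ, ∀ ω ω' : ℕ → Fin 2, π ω = π ω' → ω n = ω' n := by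
        intro n
        induction n with
        | zero =>
          intro ω ω' h
          rcases h2cases (ω 0) with h0 | h0 <;> rcases h2cases (ω' 0) with h0' | h0'
          · rw [h0, h0']
          · exfalso; have := hsign0 ω h0; have := hsign1 ω' h0'; linarith
          · exfalso; have := hsign1 ω h0; have := hsign0 ω' h0'; linarith
          · rw [h0, h0']
        | succ n ih =>
          intro ω ω' h
          have hs : π (fun k => ω (k + 1)) = π (fun k => ω' (k + 1)) := by
            have e1 := hsq ω
            have e2 := hsq ω'
            rw [h] at e1; linarith
          exact ih (fun k => ω (k + 1)) (fun k => ω' (k + 1)) hs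
      intro ω ω' h
      funext n
      exact main n ω ω' h
    refine ⟨hinj, ?_⟩
    have hcont' : Continuous fun ω => (⟨π ω, Set.mem_range_self ω⟩ : Set.range π) :=
      hcont.subtype_mk _
    exact ⟨Continuous.homeoOfEquivCompactToT2
      (f := Equiv.ofInjective π hinj) hcont', fun ω => rfl⟩
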